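/- Let m, n ≥ 3 with m > 3 or n > 3. Then every boundary vertex of the grid graph P_m □ P_n has node resistance curvature at least 17/4830; in particular the node resistance curvature on the boundary is strictly positive. -/

import Mathlib

open Classical Matrix

/-- The four Penrose conditions characterizing the Moore–Penrose pseudoinverse
of a real square matrix. -/
def IsMoorePenroseInverse {V : Type*} [Fintype V] [DecidableEq V]
    (L P : Matrix V V ℝ) : Prop :=
  L * P * L = L ∧ P * L * P = P ∧ (L * P)ᵀ = L * P ∧ (P * L)ᵀ = P * L

/-- The Moore–Penrose pseudoinverse of a real square matrix. -/
noncomputable def pinv {V : Type*} [Fintype V] [DecidableEq V]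
    (L : Matrix V V ℝ) : Matrix V V ℝ :=
  if h : ∃ P, IsMoorePenroseInverse L P then h.choose else 0

/-- Effective resistance between `x` and `y` computed from a (weighted) Laplacian `L`. -/
noncomputable def effResM {V : Type*} [Fintype V] [DecidableEq V]
    (L : Matrix V V ℝ) (x y : V) : ℝ :=
  pinv L x x + pinv L y y - 2 * pinv L x y

/-- Effective resistance between vertices `x` and `y` of a simple graph `G`. -/
noncomputable def effRes {V : Type*} [Fintype V] [DecidableEq V]
    (G : SimpleGraph V) (x y : V) : ℝ :=
  effResM (G.lapMatrix ℝ) x y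

/-- The node resistance curvature `p_x = 1 - (1/2) ∑_{y ~ x} ω_{x,y}`. -/
noncomputable def curv {V : Type*} [Fintype V] [DecidableEq V]
    (G : SimpleGraph V) (x : V) : ℝ :=
  1 - (1/2) * ∑ y : V, if G.Adj x y then effRes G x y else 0

/-- The grid graph `P_m □ P_n` (vertex `(i,j)` of the paper corresponds to
`(⟨i-1⟩, ⟨j-1⟩) : Fin m × Fin n`). -/
def grid (m n : ℕ) : SimpleGraph (Fin m × Fin n) :=
  (SimpleGraph.pathGraph m).boxProd (SimpleGraph.pathGraph n)

set_option linter.unusedSectionVars false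

section MP
variable {V : Type*} [Fintype V] [DecidableEq V]

lemma mp_unique {L P Q : Matrix V V ℝ} (hP : IsMoorePenroseInverse L P)
    (hQ : IsMoorePenroseInverse L Q) : P = Q := by
  obtain ⟨hP1, hP2, hP3, hP4⟩ := hP
  obtain ⟨hQ1, hQ2, hQ3, hQ4⟩ := hQ
  have hAP : L * P = L * Q := by
    calc L * P = (L * P)ᵀ := hP3.symm
    _ = ((L * Q * L) * P)ᵀ := by rw [hQ1]
    _ = ((L * Q) * (L * P))ᵀ := by simp only [Matrix.mul_assoc]
    _ = (L * P)ᵀ * (L * Q)ᵀ := Matrix.transpose_mul _ _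
    _ = (L * P) * (L * Q) := by rw [hP3, hQ3]
    _ = (L * P * L) * Q := by simp only [Matrix.mul_assoc]
    _ = L * Q := by rw [hP1]
  have hPA : P * L = Q * L := by
    calc P * L = (P * L)ᵀ := hP4.symm
    _ = (P * (L * Q * L))ᵀ := by rw [hQ1]
    _ = ((P * L) * (Q * L))ᵀ := by simp only [Matrix.mul_assoc]
    _ = (Q * L)ᵀ * (P * L)ᵀ := Matrix.transpose_mul _ _
    _ = (Q * L) * (P * L) := by rw [hP4, hQ4]
    _ = Q * (L * P * L) := by simp only [Matrix.mul_assoc]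
    _ = Q * L := by rw [hP1]
  calc P = P * L * P := hP2.symm
  _ = P * (L * Q) := by rw [Matrix.mul_assoc, hAP]
  _ = (P * L) * Q := by simp only [Matrix.mul_assoc]
  _ = Q * L * Q := by rw [hPA]
  _ = Q := hQ2

lemma pinv_isMP {L : Matrix V V ℝ} (h : ∃ P, IsMoorePenroseInverse L P) :
    IsMoorePenroseInverse L (pinv L) := by
  rw [pinv, dif_pos h]; exact h.choose_spec

lemma pinv_symm {L : Matrix V V ℝ} (hL : Lᵀ = L) : (pinv L)ᵀ = pinv L := by
  by_cases h : ∃ P, IsMoorePenroseInverse L P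
  · have hP := pinv_isMP h
    obtain ⟨h1, h2, h3, h4⟩ := hP
    have hT : IsMoorePenroseInverse L (pinv L)ᵀ := by
      refine ⟨?_, ?_, ?_, ?_⟩
      · have := congrArg Matrix.transpose h1
        simpa [Matrix.transpose_mul, hL, Matrix.mul_assoc] using this
      · have := congrArg Matrix.transpose h2
        simpa [Matrix.transpose_mul, hL, Matrix.mul_assoc] using this
      · have e1 : L * (pinv L)ᵀ = (pinv L * L)ᵀ := by
          rw [Matrix.transpose_mul, hL]
        rw [e1, Matrix.transpose_transpose, h4]
      · have e1 : (pinv L)ᵀ * L = (L * pinv L)ᵀ := by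
          rw [Matrix.transpose_mul, hL]
        rw [e1, Matrix.transpose_transpose, h3]
    exact mp_unique hT (pinv_isMP h)
  · rw [pinv, dif_neg h, Matrix.transpose_zero]

end MP

section Range
variable {V : Type*} [Fintype V] [DecidableEq V]

/-- On a connected graph, every vector with zero sum is in the range of the Laplacian. -/
lemma exists_mulVec_eq (G : SimpleGraph V) (hG : G.Connected)
    (b : V → ℝ) (hb : ∑ v, b v = 0) : ∃ g : V → ℝ, G.lapMatrix ℝ *ᵥ g = b := by
  classical
  set L := G.lapMatrix ℝ with hLdef
  set T : (V → ℝ) →ₗ[ℝ] (V → ℝ) := Matrix.toLin' L with hT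
  set S : (V → ℝ) →ₗ[ℝ] ℝ :=
    { toFun := fun f => ∑ v, f v
      map_add' := by intro f g; simp [Finset.sum_add_distrib]
      map_smul' := by intro c f; simp [Finset.mul_sum] } with hS
  have hne : Nonempty V := hG.nonempty
  -- kernel of T has dim 1
  have hker : Module.finrank ℝ (LinearMap.ker T) = 1 := by
    have hcard : Fintype.card G.ConnectedComponent = 1 := by
      rw [Fintype.card_eq_one_iff]
      obtain ⟨v⟩ := hne
      refine ⟨G.connectedComponentMk v, ?_⟩
      refine SimpleGraph.ConnectedComponent.ind (fun w => ?_)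
      exact SimpleGraph.ConnectedComponent.sound (hG.preconnected w v)
    have := G.card_connectedComponent_eq_finrank_ker_toLin'_lapMatrix
    rw [hcard] at this
    exact this.symm
  -- range of S is everything
  have hSsurj : LinearMap.range S = ⊤ := by
    obtain ⟨v⟩ := hne
    apply LinearMap.range_eq_top.mpr
    intro c
    refine ⟨fun w => if w = v then c else 0, ?_⟩
    simp [hS]
  have hrangeT : Module.finrank ℝ (LinearMap.range T) = Fintype.card V - 1 := by
    have := LinearMap.finrank_range_add_finrank_ker T
    rw [hker, Module.finrank_fintype_fun_eq_card] at this
    omega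
  have hkerS : Module.finrank ℝ (LinearMap.ker S) = Fintype.card V - 1 := by
    have := LinearMap.finrank_range_add_finrank_ker S
    rw [hSsurj, Module.finrank_fintype_fun_eq_card] at this
    rw [finrank_top] at this
    rw [Module.finrank_self] at this
    have hc : 1 ≤ Fintype.card V := Fintype.card_pos
    omega
  have hle : LinearMap.range T ≤ LinearMap.ker S := by
    rintro f ⟨g, rfl⟩
    simp only [LinearMap.mem_ker, hS, hT, LinearMap.coe_mk, AddHom.coe_mk]
    show ∑ v, (L *ᵥ g) v = 0
    have hsym : ∀ u v, L v u = L u v := by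
      intro u v
      have h := G.isSymm_lapMatrix (R := ℝ)
      have := congrFun (congrFun h u) v
      simpa [Matrix.transpose_apply] using this
    have hcol : ∀ u, ∑ v, L v u = 0 := by
      intro u
      have h0 := congrFun (G.lapMatrix_mulVec_const_eq_zero (R := ℝ)) u
      simp only [Matrix.mulVec, dotProduct, mul_one, Pi.zero_apply] at h0
      calc ∑ v, L v u = ∑ v, L u v := by
            exact Finset.sum_congr rfl (fun v _ => hsym u v)
      _ = 0 := h0
    calc ∑ v, (L *ᵥ g) v = ∑ v, ∑ u, L v u * g u := by
          simp [Matrix.mulVec, dotProduct]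
    _ = ∑ u, (∑ v, L v u) * g u := by
          rw [Finset.sum_comm]; simp [Finset.sum_mul]
    _ = 0 := by simp [hcol]
  have heq : LinearMap.range T = LinearMap.ker S := by
    apply Submodule.eq_of_le_of_finrank_eq hle
    rw [hrangeT, hkerS]
  have hbmem : b ∈ LinearMap.ker S := by simp [hS, hb]
  rw [← heq] at hbmem
  obtain ⟨g, hg⟩ := hbmem
  exact ⟨g, by simpa [hT, Matrix.toLin'_apply] using hg⟩

end Range

section Flow
variable {V : Type*} [Fintype V] [DecidableEq V]

lemma effRes_le_energy (G : SimpleGraph V) (hG : G.Connected) (x y : V)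
    (θ : V → V → ℝ)
    (hanti : ∀ u v, θ u v = - θ v u)
    (hsupp : ∀ u v, ¬ G.Adj u v → θ u v = 0)
    (hdiv : ∀ u, ∑ v, θ u v = (if u = x then (1:ℝ) else 0) - (if u = y then 1 else 0)) :
    effRes G x y ≤ (1/2) * ∑ u, ∑ v, (θ u v)^2 := by
  classical
  have hE0 : (0:ℝ) ≤ (1/2) * ∑ u, ∑ v, (θ u v)^2 := by positivity
  by_cases h : ∃ P, IsMoorePenroseInverse (G.lapMatrix ℝ) P
  swap
  · have : effRes G x y = 0 := by
      simp [effRes, effResM, pinv, dif_neg h]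
    rw [this]; exact hE0
  set L := G.lapMatrix ℝ with hL
  set P := pinv L with hPdef
  obtain ⟨h1, h2, h3, h4⟩ := pinv_isMP h
  have hLsym : Lᵀ = L := (G.isSymm_lapMatrix (R := ℝ))
  have hPsym : Pᵀ = P := pinv_symm hLsym
  set b : V → ℝ := fun u => (if u = x then 1 else 0) - (if u = y then 1 else 0) with hbdef
  have hbsum : ∑ v, b v = 0 := by
    simp [hbdef, Finset.sum_sub_distrib]
  obtain ⟨g, hg⟩ := exists_mulVec_eq G hG b hbsum
  set f : V → ℝ := P *ᵥ b with hfdef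
  have hLf : L *ᵥ f = b := by
    calc L *ᵥ (P *ᵥ b) = L *ᵥ (P *ᵥ (L *ᵥ g)) := by rw [hg]
    _ = (L * P * L) *ᵥ g := by rw [Matrix.mulVec_mulVec, Matrix.mulVec_mulVec]
    _ = L *ᵥ g := by rw [h1]
    _ = b := hg
  have hf : ∀ u, f u = P u x - P u y := by
    intro u
    simp [hfdef, Matrix.mulVec, dotProduct, hbdef, mul_sub, mul_ite,
      Finset.sum_sub_distrib]
  set ω : ℝ := b ⬝ᵥ f with hωdef
  have hres : effRes G x y = ω := by
    have hyx : P y x = P x y := by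
      have := congrFun (congrFun hPsym x) y
      simpa [Matrix.transpose_apply] using this
    simp only [hωdef, dotProduct, hbdef, sub_mul, ite_mul, one_mul, zero_mul,
      Finset.sum_sub_distrib, Finset.sum_ite_eq', Finset.mem_univ, if_true]
    rw [hf x, hf y]
    simp only [effRes, effResM, ← hL, ← hPdef, hyx]
    ring
  have hfb : f ⬝ᵥ b = ω := dotProduct_comm b f ▸ rfl
  have hquad : f ⬝ᵥ (L *ᵥ f) = (∑ u, ∑ v, if G.Adj u v then (f u - f v)^2 else 0) / 2 := by
    have := G.lapMatrix_toLinearMap₂' (R := ℝ) f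
    rw [Matrix.toLinearMap₂'_apply'] at this
    exact this
  have hωquad : ω = (∑ u, ∑ v, if G.Adj u v then (f u - f v)^2 else 0) / 2 := by
    rw [← hquad, hLf, hfb]
  have hω0 : 0 ≤ ω := by
    rw [hωquad]
    have : (0:ℝ) ≤ ∑ u, ∑ v, if G.Adj u v then (f u - f v)^2 else 0 := by
      apply Finset.sum_nonneg; intro u _
      apply Finset.sum_nonneg; intro v _
      split <;> positivity
    linarith
  -- the pairing sum
  have hS : ∑ u, ∑ v, θ u v * (f u - f v) = 2 * ω := by
    have e1 : ∑ u, ∑ v, θ u v * f u = ω := by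
      rw [← hfb]
      simp only [dotProduct]
      apply Finset.sum_congr rfl
      intro u _
      rw [← Finset.sum_mul, hdiv u]
      simp only [hbdef]
      ring
    have e2 : ∑ u, ∑ v, θ u v * f v = -ω := by
      rw [Finset.sum_comm]
      have : ∀ v, ∑ u, θ u v * f v = - (b v * f v) := by
        intro v
        rw [← Finset.sum_mul]
        have : ∑ u, θ u v = - b v := by
          have : ∑ u, θ u v = ∑ u, - θ v u := by
            apply Finset.sum_congr rfl; intro u _; rw [hanti]
          rw [this, Finset.sum_neg_distrib, hdiv v]
        rw [this]; ring
      rw [Finset.sum_congr rfl (fun v _ => this v), Finset.sum_neg_distrib]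
      simp only [hωdef, dotProduct]
    calc ∑ u, ∑ v, θ u v * (f u - f v)
        = ∑ u, ∑ v, (θ u v * f u - θ u v * f v) := by
          apply Finset.sum_congr rfl; intro u _
          apply Finset.sum_congr rfl; intro v _; ring
    _ = (∑ u, ∑ v, θ u v * f u) - ∑ u, ∑ v, θ u v * f v := by
          simp [Finset.sum_sub_distrib]
    _ = ω - (-ω) := by rw [e1, e2]
    _ = 2 * ω := by ring
  have hS2 : ∑ u, ∑ v, θ u v * (f u - f v)
      = ∑ p : V × V, θ p.1 p.2 * (if G.Adj p.1 p.2 then f p.1 - f p.2 else 0) := by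
    rw [Fintype.sum_prod_type]
    apply Finset.sum_congr rfl; intro u _
    apply Finset.sum_congr rfl; intro v _
    by_cases hadj : G.Adj u v
    · rw [if_pos hadj]
    · rw [if_neg hadj, hsupp u v hadj]; ring
  have hCS := Finset.sum_mul_sq_le_sq_mul_sq Finset.univ
      (fun p : V × V => θ p.1 p.2) (fun p : V × V => if G.Adj p.1 p.2 then f p.1 - f p.2 else 0)
  rw [← hS2, hS] at hCS
  have hh2 : ∑ p : V × V, (if G.Adj p.1 p.2 then f p.1 - f p.2 else 0)^2 = 2 * ω := by
    rw [Fintype.sum_prod_type, hωquad]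
    have : ∀ u v : V, (if G.Adj u v then f u - f v else 0)^2
        = if G.Adj u v then (f u - f v)^2 else 0 := by
      intro u v; split <;> simp
    rw [Finset.sum_congr rfl (fun u _ => Finset.sum_congr rfl (fun v _ => this u v))]
    ring
  rw [hh2] at hCS
  set Θ : ℝ := ∑ u, ∑ v, (θ u v)^2 with hΘ
  have hΘeq : ∑ p : V × V, (θ p.1 p.2)^2 = Θ := by rw [hΘ, Fintype.sum_prod_type]
  rw [hΘeq] at hCS
  -- hCS : (2*ω)^2 ≤ Θ * (2*ω)
  rw [hres]
  rcases eq_or_lt_of_le hω0 with hz | hpos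
  · rw [← hz]
    have : (0:ℝ) ≤ Θ := by
      rw [hΘ]; positivity
    linarith
  · nlinarith
end Flow

section Embed
variable {A : Type*} [Fintype A] [DecidableEq A]
variable {V : Type*} [Fintype V] [DecidableEq V]

private lemma sum_ite_inj_eq (e : A → V) (he : Function.Injective e) (g : A → ℝ)
    {a₀ : A} {u : V} (h : e a₀ = u) :
    ∑ a, (if e a = u then g a else 0) = g a₀ := by
  rw [Finset.sum_eq_single a₀]
  · rw [if_pos h]
  · intro a _ ha
    rw [if_neg]
    intro hea
    exact ha (he (by rw [hea, h]))
  · intro habs; exact absurd (Finset.mem_univ a₀) habs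

private lemma sum_ite_inj_zero (e : A → V) (g : A → ℝ)
    {u : V} (h : ¬ ∃ a, e a = u) :
    ∑ a, (if e a = u then g a else 0) = 0 := by
  apply Finset.sum_eq_zero
  intro a _
  rw [if_neg (fun hea => h ⟨a, hea⟩)]

lemma effRes_le_energy_embed (G : SimpleGraph A) (H : SimpleGraph V) (hH : H.Connected)
    (e : A → V) (he : Function.Injective e)
    (hadj : ∀ a b, G.Adj a b → H.Adj (e a) (e b))
    (x y : A) (θ : A → A → ℝ)
    (hanti : ∀ u v, θ u v = - θ v u)
    (hsupp : ∀ u v, ¬ G.Adj u v → θ u v = 0)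
    (hdiv : ∀ u, ∑ v, θ u v = (if u = x then (1:ℝ) else 0) - (if u = y then 1 else 0)) :
    effRes H (e x) (e y) ≤ (1/2) * ∑ u, ∑ v, (θ u v)^2 := by
  classical
  set θ' : V → V → ℝ := fun u v => ∑ a, ∑ b, if e a = u ∧ e b = v then θ a b else 0 with hθ'
  have collapse : ∀ u v : V, ∀ a₀ b₀ : A, e a₀ = u → e b₀ = v → θ' u v = θ a₀ b₀ := by
    intro u v a₀ b₀ ha hb
    rw [hθ']
    simp only
    have : ∀ a : A, (∑ b, if e a = u ∧ e b = v then θ a b else 0)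
        = if e a = u then θ a b₀ else 0 := by
      intro a
      by_cases hau : e a = u
      · simp only [hau, true_and, if_pos]
        exact sum_ite_inj_eq e he (fun b => θ a b) hb
      · simp only [hau, false_and, if_neg, if_false]
        simp
    rw [Finset.sum_congr rfl (fun a _ => this a)]
    exact sum_ite_inj_eq e he _ ha
  have vanish : ∀ u v : V, (¬ ∃ a, e a = u) ∨ (¬ ∃ b, e b = v) → θ' u v = 0 := by
    intro u v h
    rw [hθ']
    simp only
    apply Finset.sum_eq_zero; intro a _
    apply Finset.sum_eq_zero; intro b _
    rw [if_neg]
    rintro ⟨hau, hbv⟩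
    rcases h with h | h
    · exact h ⟨a, hau⟩
    · exact h ⟨b, hbv⟩
  have hanti' : ∀ u v, θ' u v = - θ' v u := by
    intro u v
    by_cases hu : ∃ a, e a = u
    · by_cases hv : ∃ b, e b = v
      · obtain ⟨a₀, ha⟩ := hu; obtain ⟨b₀, hb⟩ := hv
        rw [collapse u v a₀ b₀ ha hb, collapse v u b₀ a₀ hb ha, hanti]
      · rw [vanish u v (Or.inr hv), vanish v u (Or.inl hv)]; ring
    · rw [vanish u v (Or.inl hu), vanish v u (Or.inr hu)]; ring
  have hsupp' : ∀ u v, ¬ H.Adj u v → θ' u v = 0 := by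
    intro u v huv
    by_cases hu : ∃ a, e a = u
    · by_cases hv : ∃ b, e b = v
      · obtain ⟨a₀, ha⟩ := hu; obtain ⟨b₀, hb⟩ := hv
        rw [collapse u v a₀ b₀ ha hb]
        apply hsupp
        intro hG
        exact huv (ha ▸ hb ▸ hadj a₀ b₀ hG)
      · exact vanish u v (Or.inr hv)
    · exact vanish u v (Or.inl hu)
  have hdiv' : ∀ u, ∑ v, θ' u v
      = (if u = e x then (1:ℝ) else 0) - (if u = e y then 1 else 0) := by
    intro u
    by_cases hu : ∃ a, e a = u
    · obtain ⟨a₀, ha⟩ := hu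
      have : ∀ v, θ' u v = ∑ b, if e b = v then θ a₀ b else 0 := by
        intro v
        by_cases hv : ∃ b, e b = v
        · obtain ⟨b₀, hb⟩ := hv
          rw [collapse u v a₀ b₀ ha hb, sum_ite_inj_eq e he _ hb]
        · rw [vanish u v (Or.inr hv), sum_ite_inj_zero e _ hv]
      rw [Finset.sum_congr rfl (fun v _ => this v), Finset.sum_comm]
      have : ∀ b : A, ∑ v : V, (if e b = v then θ a₀ b else 0) = θ a₀ b := by
        intro b
        rw [Finset.sum_eq_single (e b)]
        · rw [if_pos rfl]
        · intro v _ hv; rw [if_neg (fun hh => hv hh.symm)]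
        · intro habs; exact absurd (Finset.mem_univ _) habs
      rw [Finset.sum_congr rfl (fun b _ => this b), hdiv a₀]
      have hx : (u = e x) ↔ (a₀ = x) := by
        constructor
        · intro hh; exact he (by rw [ha, hh])
        · intro hh; rw [← ha, hh]
      have hy : (u = e y) ↔ (a₀ = y) := by
        constructor
        · intro hh; exact he (by rw [ha, hh])
        · intro hh; rw [← ha, hh]
      simp only [hx, hy]
    · have hz : ∀ v, θ' u v = 0 := fun v => vanish u v (Or.inl hu)
      rw [Finset.sum_congr rfl (fun v _ => hz v), Finset.sum_const_zero]
      have hx : ¬ (u = e x) := fun hh => hu ⟨x, hh.symm⟩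
      have hy : ¬ (u = e y) := fun hh => hu ⟨y, hh.symm⟩
      rw [if_neg hx, if_neg hy]; ring
  have hle := effRes_le_energy H hH (e x) (e y) θ' hanti' hsupp' hdiv'
  refine le_trans hle ?_
  have heng : ∑ u, ∑ v, (θ' u v)^2 = ∑ u, ∑ v, (θ u v)^2 := by
    have key : ∀ p : V × V, (θ' p.1 p.2)^2
        = ∑ q : A × A, if (e q.1, e q.2) = p then (θ q.1 q.2)^2 else 0 := by
      rintro ⟨u, v⟩
      by_cases hu : ∃ a, e a = u
      · by_cases hv : ∃ b, e b = v
        · obtain ⟨a₀, ha⟩ := hu; obtain ⟨b₀, hb⟩ := hv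
          rw [collapse u v a₀ b₀ ha hb]
          rw [Finset.sum_eq_single (a₀, b₀)]
          · rw [if_pos (by rw [ha, hb])]
          · rintro ⟨a, b⟩ _ hq
            rw [if_neg]
            intro hh
            apply hq
            have h1 : e a = u := congrArg Prod.fst hh
            have h2 : e b = v := congrArg Prod.snd hh
            have : a = a₀ := he (by rw [h1, ha])
            have hb2 : b = b₀ := he (by rw [h2, hb])
            rw [this, hb2]
          · intro habs; exact absurd (Finset.mem_univ _) habs
        · rw [vanish u v (Or.inr hv)]
          rw [Finset.sum_eq_zero]
          · ring
          · rintro ⟨a, b⟩ _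
            rw [if_neg]
            intro hh
            exact hv ⟨b, congrArg Prod.snd hh⟩
      · rw [vanish u v (Or.inl hu)]
        rw [Finset.sum_eq_zero]
        · ring
        · rintro ⟨a, b⟩ _
          rw [if_neg]
          intro hh
          exact hu ⟨a, congrArg Prod.fst hh⟩
    calc ∑ u, ∑ v, (θ' u v)^2 = ∑ p : V × V, (θ' p.1 p.2)^2 := by
          rw [Fintype.sum_prod_type]
    _ = ∑ p : V × V, ∑ q : A × A, if (e q.1, e q.2) = p then (θ q.1 q.2)^2 else 0 := by
          exact Finset.sum_congr rfl (fun p _ => key p)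
    _ = ∑ q : A × A, ∑ p : V × V, (if (e q.1, e q.2) = p then (θ q.1 q.2)^2 else 0) := by
          rw [Finset.sum_comm]
    _ = ∑ q : A × A, (θ q.1 q.2)^2 := by
          apply Finset.sum_congr rfl
          intro q _
          rw [Finset.sum_eq_single (e q.1, e q.2)]
          · rw [if_pos rfl]
          · intro p _ hp; rw [if_neg (fun hh => hp hh.symm)]
          · intro habs; exact absurd (Finset.mem_univ _) habs
    _ = ∑ u, ∑ v, (θ u v)^2 := by rw [Fintype.sum_prod_type]
  rw [heng]
end Embed

section Templates

instance gridAdjDecidable (m n : ℕ) : DecidableRel (grid m n).Adj := fun a b =>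
  decidable_of_iff
    ((a.1.val + 1 = b.1.val ∨ b.1.val + 1 = a.1.val) ∧ a.2 = b.2 ∨
      a.1 = b.1 ∧ (a.2.val + 1 = b.2.val ∨ b.2.val + 1 = a.2.val))
    (by rw [grid, SimpleGraph.boxProd_adj]
        simp [SimpleGraph.pathGraph_adj]
        tauto)

variable {V : Type*} [Fintype V] [DecidableEq V]

lemma template_bound {p q : ℕ} (f : Fin p × Fin q → ℝ) (x y : Fin p × Fin q)
    (H : SimpleGraph V) (hH : H.Connected)
    (e : Fin p × Fin q → V) (he : Function.Injective e)
    (hadj : ∀ a b, (grid p q).Adj a b → H.Adj (e a) (e b))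
    (hdiv : ∀ u, (∑ v, if (grid p q).Adj u v then f u - f v else 0)
      = (if u = x then (1:ℝ) else 0) - (if u = y then 1 else 0))
    (c : ℝ)
    (hc : (1/2) * (∑ u, ∑ v, (if (grid p q).Adj u v then f u - f v else 0)^2) ≤ c) :
    effRes H (e x) (e y) ≤ c := by
  classical
  refine le_trans (effRes_le_energy_embed (grid p q) H hH e he hadj x y
    (fun u v => if (grid p q).Adj u v then f u - f v else 0) ?_ ?_ hdiv) hc
  · intro u v
    by_cases h : (grid p q).Adj u v
    · rw [if_pos h, if_pos (h.symm)]; ring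
    · rw [if_neg h, if_neg (fun hh => h hh.symm)]; ring
  · intro u v h
    rw [if_neg h]

/-- potentials for template A : 3×2 grid, source (1,0), sink (1,1), R = 3/5 -/
noncomputable def fA : Fin 3 × Fin 2 → ℝ :=
  fun p => ![![1, 0], ![2, -1], ![1, 0]] p.1 p.2 / 5

lemma boundA (H : SimpleGraph V) (hH : H.Connected)
    (e : Fin 3 × Fin 2 → V) (he : Function.Injective e)
    (hadj : ∀ a b, (grid 3 2).Adj a b → H.Adj (e a) (e b)) :
    effRes H (e (1, 0)) (e (1, 1)) ≤ 3/5 := by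
  apply template_bound fA (1,0) (1,1) H hH e he hadj
  · intro u
    fin_cases u <;>
      · simp only [Fintype.sum_prod_type, Fin.sum_univ_succ, Finset.univ_unique,
          Finset.sum_singleton, fA]
        norm_num [grid, SimpleGraph.boxProd_adj, SimpleGraph.pathGraph_adj,
          Fin.ext_iff, Prod.ext_iff, Matrix.cons_val_two, Matrix.vecHead, Matrix.vecTail]
  · simp only [Fintype.sum_prod_type, Fin.sum_univ_succ, Finset.univ_unique,
      Finset.sum_singleton, fA]
    norm_num [grid, SimpleGraph.boxProd_adj, SimpleGraph.pathGraph_adj,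
      Fin.ext_iff, Prod.ext_iff, Matrix.cons_val_two, Matrix.vecHead, Matrix.vecTail]

end Templates

section Templates2
variable {V : Type*} [Fintype V] [DecidableEq V]

/-- template B : 4×3 grid, source (1,0), sink (2,0), R = 109/161 -/
noncomputable def fB : Fin 4 × Fin 3 → ℝ :=
  fun p => ![![56, 41, 33], ![71, 34, 25], ![-38, -1, 8], ![-23, -8, 0]] p.1 p.2 / 161

lemma boundB (H : SimpleGraph V) (hH : H.Connected)
    (e : Fin 4 × Fin 3 → V) (he : Function.Injective e)
    (hadj : ∀ a b, (grid 4 3).Adj a b → H.Adj (e a) (e b)) :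
    effRes H (e (1, 0)) (e (2, 0)) ≤ 109/161 := by
  apply template_bound fB (1,0) (2,0) H hH e he hadj
  · intro u
    fin_cases u <;>
      · simp only [Fintype.sum_prod_type, Fin.sum_univ_succ, Finset.univ_unique,
          Finset.sum_singleton, fB]
        norm_num [grid, SimpleGraph.boxProd_adj, SimpleGraph.pathGraph_adj,
          Fin.ext_iff, Prod.ext_iff, Matrix.cons_val_two, Matrix.vecHead, Matrix.vecTail]
  · simp only [Fintype.sum_prod_type, Fin.sum_univ_succ, Finset.univ_unique,
      Finset.sum_singleton, fB]
    norm_num [grid, SimpleGraph.boxProd_adj, SimpleGraph.pathGraph_adj,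
      Fin.ext_iff, Prod.ext_iff, Matrix.cons_val_two, Matrix.vecHead, Matrix.vecTail]

/-- template C : 3×3 grid, source (0,0), sink (1,0), R = 17/24 -/
noncomputable def fC : Fin 3 × Fin 3 → ℝ :=
  fun p => ![![12, 5, 3], ![-5, 0, 1], ![-3, -1, 0]] p.1 p.2 / 24

lemma boundC (H : SimpleGraph V) (hH : H.Connected)
    (e : Fin 3 × Fin 3 → V) (he : Function.Injective e)
    (hadj : ∀ a b, (grid 3 3).Adj a b → H.Adj (e a) (e b)) :
    effRes H (e (0, 0)) (e (1, 0)) ≤ 17/24 := by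
  apply template_bound fC (0,0) (1,0) H hH e he hadj
  · intro u
    fin_cases u <;>
      · simp only [Fintype.sum_prod_type, Fin.sum_univ_succ, Finset.univ_unique,
          Finset.sum_singleton, fC]
        norm_num [grid, SimpleGraph.boxProd_adj, SimpleGraph.pathGraph_adj,
          Fin.ext_iff, Prod.ext_iff, Matrix.cons_val_two, Matrix.vecHead, Matrix.vecTail]
  · simp only [Fintype.sum_prod_type, Fin.sum_univ_succ, Finset.univ_unique,
      Finset.sum_singleton, fC]
    norm_num [grid, SimpleGraph.boxProd_adj, SimpleGraph.pathGraph_adj,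
      Fin.ext_iff, Prod.ext_iff, Matrix.cons_val_two, Matrix.vecHead, Matrix.vecTail]

/-- template A4 : 3×4 grid, source (1,0), sink (1,1), R = 67/115 -/
noncomputable def fA4 : Fin 3 × Fin 4 → ℝ :=
  fun p => ![![30, 6, 1, 0], ![54, -13, -3, -1], ![30, 6, 1, 0]] p.1 p.2 / 115

lemma boundA4 (H : SimpleGraph V) (hH : H.Connected)
    (e : Fin 3 × Fin 4 → V) (he : Function.Injective e)
    (hadj : ∀ a b, (grid 3 4).Adj a b → H.Adj (e a) (e b)) :
    effRes H (e (1, 0)) (e (1, 1)) ≤ 67/115 := by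
  apply template_bound fA4 (1,0) (1,1) H hH e he hadj
  · intro u
    fin_cases u <;>
      · simp only [Fintype.sum_prod_type, Fin.sum_univ_succ, Finset.univ_unique,
          Finset.sum_singleton, fA4]
        norm_num [grid, SimpleGraph.boxProd_adj, SimpleGraph.pathGraph_adj,
          Fin.ext_iff, Prod.ext_iff, Matrix.cons_val_two, Matrix.vecHead, Matrix.vecTail]
  · simp only [Fintype.sum_prod_type, Fin.sum_univ_succ, Finset.univ_unique,
      Finset.sum_singleton, fA4]
    norm_num [grid, SimpleGraph.boxProd_adj, SimpleGraph.pathGraph_adj,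
      Fin.ext_iff, Prod.ext_iff, Matrix.cons_val_two, Matrix.vecHead, Matrix.vecTail]

/-- template D4 : 3×4 grid, source (0,0), sink (1,0), R = 1703/2415 -/
noncomputable def fD4 : Fin 3 × Fin 4 → ℝ :=
  fun p => ![![1120, 408, 183, 115], ![-583, -79, 26, 47], ![-375, -167, -47, 0]] p.1 p.2 / 2415

lemma boundD4 (H : SimpleGraph V) (hH : H.Connected)
    (e : Fin 3 × Fin 4 → V) (he : Function.Injective e)
    (hadj : ∀ a b, (grid 3 4).Adj a b → H.Adj (e a) (e b)) :
    effRes H (e (0, 0)) (e (1, 0)) ≤ 1703/2415 := by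
  apply template_bound fD4 (0,0) (1,0) H hH e he hadj
  · intro u
    fin_cases u <;>
      · simp only [Fintype.sum_prod_type, Fin.sum_univ_succ, Finset.univ_unique,
          Finset.sum_singleton, fD4]
        norm_num [grid, SimpleGraph.boxProd_adj, SimpleGraph.pathGraph_adj,
          Fin.ext_iff, Prod.ext_iff, Matrix.cons_val_two, Matrix.vecHead, Matrix.vecTail]
  · simp only [Fintype.sum_prod_type, Fin.sum_univ_succ, Finset.univ_unique,
      Finset.sum_singleton, fD4]
    norm_num [grid, SimpleGraph.boxProd_adj, SimpleGraph.pathGraph_adj,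
      Fin.ext_iff, Prod.ext_iff, Matrix.cons_val_two, Matrix.vecHead, Matrix.vecTail]

end Templates2

section Iso
variable {A : Type*} [Fintype A] [DecidableEq A]
variable {B : Type*} [Fintype B] [DecidableEq B]

lemma lapMatrix_iso (G : SimpleGraph A) (H : SimpleGraph B) (e : G ≃g H) :
    H.lapMatrix ℝ = (G.lapMatrix ℝ).submatrix (e.symm.toEquiv) (e.symm.toEquiv) := by
  classical
  ext i j
  have hdeg : ∀ v : B, H.degree v = G.degree (e.symm v) := by
    intro v
    rw [← SimpleGraph.card_neighborSet_eq_degree, ← SimpleGraph.card_neighborSet_eq_degree]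
    exact Fintype.card_congr (e.symm.mapNeighborSet v)
  have hadj : H.Adj i j ↔ G.Adj (e.symm i) (e.symm j) := (e.symm).map_adj_iff.symm
  simp only [SimpleGraph.lapMatrix, Matrix.sub_apply, Matrix.submatrix_apply,
    SimpleGraph.degMatrix, SimpleGraph.adjMatrix, Matrix.of_apply, RelIso.coe_fn_toEquiv]
  congr 1
  · rw [Matrix.diagonal_apply, Matrix.diagonal_apply]
    by_cases hij : i = j
    · subst hij; rw [if_pos rfl, if_pos rfl, hdeg]
    · rw [if_neg hij, if_neg (fun hh => hij (by
        have := congrArg e hh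
        simpa using this))]
  · by_cases hij : H.Adj i j
    · rw [if_pos hij, if_pos (hadj.mp hij)]
    · rw [if_neg hij, if_neg (fun hh => hij (hadj.mpr hh))]

lemma isMP_submatrix {L P : Matrix A A ℝ} (σ : B ≃ A)
    (h : IsMoorePenroseInverse L P) :
    IsMoorePenroseInverse (L.submatrix σ σ) (P.submatrix σ σ) := by
  obtain ⟨h1, h2, h3, h4⟩ := h
  refine ⟨?_, ?_, ?_, ?_⟩
  · rw [Matrix.submatrix_mul_equiv, Matrix.submatrix_mul_equiv]
    rw [h1]
  · rw [Matrix.submatrix_mul_equiv, Matrix.submatrix_mul_equiv]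
    rw [h2]
  · rw [Matrix.submatrix_mul_equiv, Matrix.transpose_submatrix, h3]
  · rw [Matrix.submatrix_mul_equiv, Matrix.transpose_submatrix, h4]

lemma pinv_submatrix (L : Matrix A A ℝ) (σ : B ≃ A) :
    pinv (L.submatrix σ σ) = (pinv L).submatrix σ σ := by
  by_cases h : ∃ P, IsMoorePenroseInverse L P
  · have h1 : IsMoorePenroseInverse (L.submatrix σ σ) ((pinv L).submatrix σ σ) :=
      isMP_submatrix σ (pinv_isMP h)
    have h2 : ∃ Q, IsMoorePenroseInverse (L.submatrix σ σ) Q := ⟨_, h1⟩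
    exact mp_unique (pinv_isMP h2) h1
  · have h' : ¬ ∃ Q, IsMoorePenroseInverse (L.submatrix σ σ) Q := by
      rintro ⟨Q, hQ⟩
      apply h
      refine ⟨Q.submatrix σ.symm σ.symm, ?_⟩
      have := isMP_submatrix σ.symm hQ
      simpa [Matrix.submatrix_submatrix, Equiv.self_comp_symm,
        Matrix.submatrix_id_id] using this
    rw [pinv, pinv, dif_neg h, dif_neg h']
    ext i j
    simp

lemma effRes_iso (G : SimpleGraph A) (H : SimpleGraph B) (e : G ≃g H) (x y : A) :
    effRes H (e x) (e y) = effRes G x y := by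
  rw [effRes, effRes, effResM, effResM, lapMatrix_iso G H e,
    pinv_submatrix (G.lapMatrix ℝ) (e.symm.toEquiv)]
  simp only [Matrix.submatrix_apply, RelIso.coe_fn_toEquiv]
  have hx : e.symm (e x) = x := by simp
  have hy : e.symm (e y) = y := by simp
  rw [hx, hy]

lemma curv_iso (G : SimpleGraph A) (H : SimpleGraph B) (e : G ≃g H) (v : A) :
    curv H (e v) = curv G v := by
  rw [curv, curv]
  congr 1
  congr 1
  calc ∑ y : B, (if H.Adj (e v) y then effRes H (e v) y else 0)
      = ∑ z : A, (if H.Adj (e v) (e z) then effRes H (e v) (e z) else 0) :=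
        (Fintype.sum_equiv e.toEquiv _ _ (fun z => rfl)).symm
    _ = ∑ z : A, (if G.Adj v z then effRes G v z else 0) := by
        apply Finset.sum_congr rfl
        intro z _
        have hadj : H.Adj (e v) (e z) ↔ G.Adj v z := e.map_adj_iff
        by_cases h : G.Adj v z
        · rw [if_pos (hadj.mpr h), if_pos h]
          exact effRes_iso G H e v z
        · rw [if_neg (fun hh => h (hadj.mp hh)), if_neg h]

end Iso

section Assemble
variable {V : Type*} [Fintype V] [DecidableEq V]

lemma grid_connected (m n : ℕ) (hm : 1 ≤ m) (hn : 1 ≤ n) : (grid m n).Connected := by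
  obtain ⟨m', rfl⟩ : ∃ k, m = k + 1 := ⟨m - 1, by omega⟩
  obtain ⟨n', rfl⟩ : ∃ k, n = k + 1 := ⟨n - 1, by omega⟩
  exact (SimpleGraph.pathGraph_connected m').boxProd (SimpleGraph.pathGraph_connected n')

lemma effRes_symm (G : SimpleGraph V) (x y : V) : effRes G x y = effRes G y x := by
  classical
  have hPsym := pinv_symm (L := G.lapMatrix ℝ) (G.isSymm_lapMatrix (R := ℝ))
  have hxy : pinv (G.lapMatrix ℝ) x y = pinv (G.lapMatrix ℝ) y x := by
    have := congrFun (congrFun hPsym y) x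
    simpa [Matrix.transpose_apply] using this
  rw [effRes, effRes, effResM, effResM, hxy]
  ring

lemma curv_ge3 (G : SimpleGraph V) (v a b c : V) (hab : a ≠ b) (hac : a ≠ c) (hbc : b ≠ c)
    (hS : ∀ y, G.Adj v y ↔ (y = a ∨ y = b ∨ y = c))
    (ra rb rc : ℝ) (ha : effRes G v a ≤ ra) (hb : effRes G v b ≤ rb) (hc : effRes G v c ≤ rc) :
    1 - (1/2) * (ra + rb + rc) ≤ curv G v := by
  rw [curv]
  have key : ∀ y : V, (if G.Adj v y then effRes G v y else 0)
      = (if y = a then effRes G v a else 0) + (if y = b then effRes G v b else 0)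
        + (if y = c then effRes G v c else 0) := by
    intro y
    by_cases hy : G.Adj v y
    · rw [if_pos hy]
      rcases (hS y).mp hy with rfl | rfl | rfl
      · rw [if_pos rfl, if_neg hab, if_neg hac]; ring
      · rw [if_neg (fun h => hab h.symm), if_pos rfl, if_neg hbc]; ring
      · rw [if_neg (fun h => hac h.symm), if_neg (fun h => hbc h.symm), if_pos rfl]; ring
    · rw [if_neg hy, if_neg, if_neg, if_neg]
      · ring
      · rintro rfl; exact hy ((hS _).mpr (Or.inr (Or.inr rfl)))
      · rintro rfl; exact hy ((hS _).mpr (Or.inr (Or.inl rfl)))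
      · rintro rfl; exact hy ((hS _).mpr (Or.inl rfl))
  rw [Finset.sum_congr rfl (fun y _ => key y)]
  rw [Finset.sum_add_distrib, Finset.sum_add_distrib]
  rw [Finset.sum_ite_eq' Finset.univ a (fun _ => effRes G v a),
    Finset.sum_ite_eq' Finset.univ b (fun _ => effRes G v b),
    Finset.sum_ite_eq' Finset.univ c (fun _ => effRes G v c)]
  simp only [Finset.mem_univ, if_true]
  linarith

lemma curv_ge2 (G : SimpleGraph V) (v a b : V) (hab : a ≠ b)
    (hS : ∀ y, G.Adj v y ↔ (y = a ∨ y = b))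
    (ra rb : ℝ) (ha : effRes G v a ≤ ra) (hb : effRes G v b ≤ rb) :
    1 - (1/2) * (ra + rb) ≤ curv G v := by
  rw [curv]
  have key : ∀ y : V, (if G.Adj v y then effRes G v y else 0)
      = (if y = a then effRes G v a else 0) + (if y = b then effRes G v b else 0) := by
    intro y
    by_cases hy : G.Adj v y
    · rw [if_pos hy]
      rcases (hS y).mp hy with rfl | rfl
      · rw [if_pos rfl, if_neg hab]; ring
      · rw [if_neg (fun h => hab h.symm), if_pos rfl]; ring
    · rw [if_neg hy, if_neg, if_neg]
      · ring
      · rintro rfl; exact hy ((hS _).mpr (Or.inr rfl))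
      · rintro rfl; exact hy ((hS _).mpr (Or.inl rfl))
  rw [Finset.sum_congr rfl (fun y _ => key y)]
  rw [Finset.sum_add_distrib]
  rw [Finset.sum_ite_eq' Finset.univ a (fun _ => effRes G v a),
    Finset.sum_ite_eq' Finset.univ b (fun _ => effRes G v b)]
  simp only [Finset.mem_univ, if_true]
  linarith

/-- reflection of the grid in the first coordinate -/
def hrefl (m n : ℕ) : grid m n ≃g grid m n where
  toEquiv := Equiv.prodCongr (Fin.revPerm) (Equiv.refl _)
  map_rel_iff' := by
    rintro ⟨a1, a2⟩ ⟨b1, b2⟩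
    simp only [grid, SimpleGraph.boxProd_adj, Equiv.prodCongr_apply, Equiv.coe_refl,
      Prod.map, SimpleGraph.pathGraph_adj, Fin.revPerm_apply, Fin.val_rev, id_eq,
      Fin.ext_iff]
    have := a1.is_lt; have := b1.is_lt
    have := a2.is_lt; have := b2.is_lt
    omega

/-- reflection of the grid in the second coordinate -/
def vrefl (m n : ℕ) : grid m n ≃g grid m n where
  toEquiv := Equiv.prodCongr (Equiv.refl _) (Fin.revPerm)
  map_rel_iff' := by
    rintro ⟨a1, a2⟩ ⟨b1, b2⟩
    simp only [grid, SimpleGraph.boxProd_adj, Equiv.prodCongr_apply, Equiv.coe_refl,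
      Prod.map, SimpleGraph.pathGraph_adj, Fin.revPerm_apply, Fin.val_rev, id_eq,
      Fin.ext_iff]
    have := a1.is_lt; have := b1.is_lt
    have := a2.is_lt; have := b2.is_lt
    omega

/-- transposition of the grid -/
def gswap (m n : ℕ) : grid m n ≃g grid n m :=
  SimpleGraph.boxProdComm (SimpleGraph.pathGraph m) (SimpleGraph.pathGraph n)

end Assemble

section Cases

lemma case_corner (m n : ℕ) (hm : 3 ≤ m) (hn : 3 ≤ n) :
    17/4830 ≤ curv (grid m n) ((⟨0, by omega⟩ : Fin m), (⟨0, by omega⟩ : Fin n)) := by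
  have hconn : (grid m n).Connected := grid_connected m n (by omega) (by omega)
  have hS : ∀ y : Fin m × Fin n,
      (grid m n).Adj ((⟨0, by omega⟩ : Fin m), (⟨0, by omega⟩ : Fin n)) y ↔
      (y = ((⟨1, by omega⟩ : Fin m), (⟨0, by omega⟩ : Fin n))
        ∨ y = ((⟨0, by omega⟩ : Fin m), (⟨1, by omega⟩ : Fin n))) := by
    rintro ⟨⟨y1, h1⟩, ⟨y2, h2⟩⟩
    simp only [grid, SimpleGraph.boxProd_adj, SimpleGraph.pathGraph_adj,
      Prod.mk.injEq, Fin.mk.injEq, Fin.ext_iff]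
    omega
  have hra : effRes (grid m n)
      ((⟨0, by omega⟩ : Fin m), (⟨0, by omega⟩ : Fin n))
      ((⟨1, by omega⟩ : Fin m), (⟨0, by omega⟩ : Fin n)) ≤ 17/24 := by
    have hb := boundC (grid m n) hconn
      (fun p => ((⟨p.1.val, by have := p.1.is_lt; omega⟩ : Fin m),
        (⟨p.2.val, by have := p.2.is_lt; omega⟩ : Fin n)))
      (by rintro ⟨⟨p1, hp1⟩, ⟨p2, hp2⟩⟩ ⟨⟨q1, hq1⟩, ⟨q2, hq2⟩⟩ hpq
          simp only [Prod.mk.injEq, Fin.mk.injEq] at hpq ⊢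
          omega)
      (by rintro ⟨⟨p1, hp1⟩, ⟨p2, hp2⟩⟩ ⟨⟨q1, hq1⟩, ⟨q2, hq2⟩⟩ hpq
          simp only [grid, SimpleGraph.boxProd_adj, SimpleGraph.pathGraph_adj,
            Fin.mk.injEq, Fin.ext_iff] at hpq ⊢
          omega)
    convert hb using 2 <;> simp [Prod.ext_iff, Fin.ext_iff]
  have hrb : effRes (grid m n)
      ((⟨0, by omega⟩ : Fin m), (⟨0, by omega⟩ : Fin n))
      ((⟨0, by omega⟩ : Fin m), (⟨1, by omega⟩ : Fin n)) ≤ 17/24 := by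
    have hb := boundC (grid m n) hconn
      (fun p => ((⟨p.2.val, by have := p.2.is_lt; omega⟩ : Fin m),
        (⟨p.1.val, by have := p.1.is_lt; omega⟩ : Fin n)))
      (by rintro ⟨⟨p1, hp1⟩, ⟨p2, hp2⟩⟩ ⟨⟨q1, hq1⟩, ⟨q2, hq2⟩⟩ hpq
          simp only [Prod.mk.injEq, Fin.mk.injEq] at hpq ⊢
          omega)
      (by rintro ⟨⟨p1, hp1⟩, ⟨p2, hp2⟩⟩ ⟨⟨q1, hq1⟩, ⟨q2, hq2⟩⟩ hpq
          simp only [grid, SimpleGraph.boxProd_adj, SimpleGraph.pathGraph_adj,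
            Fin.mk.injEq, Fin.ext_iff] at hpq ⊢
          omega)
    convert hb using 2 <;> simp [Prod.ext_iff, Fin.ext_iff]
  have := curv_ge2 (grid m n) _ _ _
    (by intro h; simp only [Prod.mk.injEq, Fin.mk.injEq] at h; omega) hS _ _ hra hrb
  refine le_trans (by norm_num) this

lemma case_mid (m n : ℕ) (hm : 3 ≤ m) (hn : 3 ≤ n) (i : ℕ) (hi2 : 2 ≤ i) (hi3 : i ≤ m - 3) :
    17/4830 ≤ curv (grid m n) ((⟨i, by omega⟩ : Fin m), (⟨0, by omega⟩ : Fin n)) := by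
  have hconn : (grid m n).Connected := grid_connected m n (by omega) (by omega)
  have hS : ∀ y : Fin m × Fin n,
      (grid m n).Adj ((⟨i, by omega⟩ : Fin m), (⟨0, by omega⟩ : Fin n)) y ↔
      (y = ((⟨i - 1, by omega⟩ : Fin m), (⟨0, by omega⟩ : Fin n))
        ∨ y = ((⟨i + 1, by omega⟩ : Fin m), (⟨0, by omega⟩ : Fin n))
        ∨ y = ((⟨i, by omega⟩ : Fin m), (⟨1, by omega⟩ : Fin n))) := by
    rintro ⟨⟨y1, h1⟩, ⟨y2, h2⟩⟩
    simp only [grid, SimpleGraph.boxProd_adj, SimpleGraph.pathGraph_adj,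
      Prod.mk.injEq, Fin.mk.injEq, Fin.ext_iff]
    omega
  have hra : effRes (grid m n)
      ((⟨i, by omega⟩ : Fin m), (⟨0, by omega⟩ : Fin n))
      ((⟨i - 1, by omega⟩ : Fin m), (⟨0, by omega⟩ : Fin n)) ≤ 109/161 := by
    rw [effRes_symm]
    have hb := boundB (grid m n) hconn
      (fun p => ((⟨i - 2 + p.1.val, by have := p.1.is_lt; omega⟩ : Fin m),
        (⟨p.2.val, by have := p.2.is_lt; omega⟩ : Fin n)))
      (by rintro ⟨⟨p1, hp1⟩, ⟨p2, hp2⟩⟩ ⟨⟨q1, hq1⟩, ⟨q2, hq2⟩⟩ hpq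
          simp only [Prod.mk.injEq, Fin.mk.injEq] at hpq ⊢
          omega)
      (by rintro ⟨⟨p1, hp1⟩, ⟨p2, hp2⟩⟩ ⟨⟨q1, hq1⟩, ⟨q2, hq2⟩⟩ hpq
          simp only [grid, SimpleGraph.boxProd_adj, SimpleGraph.pathGraph_adj,
            Fin.mk.injEq, Fin.ext_iff] at hpq ⊢
          omega)
    convert hb using 2 <;> simp [Prod.ext_iff, Fin.ext_iff] <;> omega
  have hrb : effRes (grid m n)
      ((⟨i, by omega⟩ : Fin m), (⟨0, by omega⟩ : Fin n))
      ((⟨i + 1, by omega⟩ : Fin m), (⟨0, by omega⟩ : Fin n)) ≤ 109/161 := by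
    have hb := boundB (grid m n) hconn
      (fun p => ((⟨i - 1 + p.1.val, by have := p.1.is_lt; omega⟩ : Fin m),
        (⟨p.2.val, by have := p.2.is_lt; omega⟩ : Fin n)))
      (by rintro ⟨⟨p1, hp1⟩, ⟨p2, hp2⟩⟩ ⟨⟨q1, hq1⟩, ⟨q2, hq2⟩⟩ hpq
          simp only [Prod.mk.injEq, Fin.mk.injEq] at hpq ⊢
          omega)
      (by rintro ⟨⟨p1, hp1⟩, ⟨p2, hp2⟩⟩ ⟨⟨q1, hq1⟩, ⟨q2, hq2⟩⟩ hpq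
          simp only [grid, SimpleGraph.boxProd_adj, SimpleGraph.pathGraph_adj,
            Fin.mk.injEq, Fin.ext_iff] at hpq ⊢
          omega)
    convert hb using 2 <;> simp [Prod.ext_iff, Fin.ext_iff] <;> omega
  have hrc : effRes (grid m n)
      ((⟨i, by omega⟩ : Fin m), (⟨0, by omega⟩ : Fin n))
      ((⟨i, by omega⟩ : Fin m), (⟨1, by omega⟩ : Fin n)) ≤ 3/5 := by
    have hb := boundA (grid m n) hconn
      (fun p => ((⟨i - 1 + p.1.val, by have := p.1.is_lt; omega⟩ : Fin m),
        (⟨p.2.val, by have := p.2.is_lt; omega⟩ : Fin n)))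
      (by rintro ⟨⟨p1, hp1⟩, ⟨p2, hp2⟩⟩ ⟨⟨q1, hq1⟩, ⟨q2, hq2⟩⟩ hpq
          simp only [Prod.mk.injEq, Fin.mk.injEq] at hpq ⊢
          omega)
      (by rintro ⟨⟨p1, hp1⟩, ⟨p2, hp2⟩⟩ ⟨⟨q1, hq1⟩, ⟨q2, hq2⟩⟩ hpq
          simp only [grid, SimpleGraph.boxProd_adj, SimpleGraph.pathGraph_adj,
            Fin.mk.injEq, Fin.ext_iff] at hpq ⊢
          omega)
    convert hb using 2 <;> simp [Prod.ext_iff, Fin.ext_iff] <;> omega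
  have := curv_ge3 (grid m n) _ _ _ _
    (by intro h; simp only [Prod.mk.injEq, Fin.mk.injEq] at h; omega)
    (by intro h; simp only [Prod.mk.injEq, Fin.mk.injEq] at h; omega)
    (by intro h; simp only [Prod.mk.injEq, Fin.mk.injEq] at h; omega)
    hS _ _ _ hra hrb hrc
  refine le_trans (by norm_num) this

end Cases

section Cases2

lemma case_near (m n : ℕ) (hm : 4 ≤ m) (hn : 3 ≤ n) :
    17/4830 ≤ curv (grid m n) ((⟨1, by omega⟩ : Fin m), (⟨0, by omega⟩ : Fin n)) := by
  have hconn : (grid m n).Connected := grid_connected m n (by omega) (by omega)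
  have hS : ∀ y : Fin m × Fin n,
      (grid m n).Adj ((⟨1, by omega⟩ : Fin m), (⟨0, by omega⟩ : Fin n)) y ↔
      (y = ((⟨0, by omega⟩ : Fin m), (⟨0, by omega⟩ : Fin n))
        ∨ y = ((⟨2, by omega⟩ : Fin m), (⟨0, by omega⟩ : Fin n))
        ∨ y = ((⟨1, by omega⟩ : Fin m), (⟨1, by omega⟩ : Fin n))) := by
    rintro ⟨⟨y1, h1⟩, ⟨y2, h2⟩⟩
    simp only [grid, SimpleGraph.boxProd_adj, SimpleGraph.pathGraph_adj,
      Prod.mk.injEq, Fin.mk.injEq, Fin.ext_iff]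
    omega
  have hra : effRes (grid m n)
      ((⟨1, by omega⟩ : Fin m), (⟨0, by omega⟩ : Fin n))
      ((⟨0, by omega⟩ : Fin m), (⟨0, by omega⟩ : Fin n)) ≤ 17/24 := by
    rw [effRes_symm]
    have hb := boundC (grid m n) hconn
      (fun p => ((⟨p.1.val, by have := p.1.is_lt; omega⟩ : Fin m),
        (⟨p.2.val, by have := p.2.is_lt; omega⟩ : Fin n)))
      (by rintro ⟨⟨p1, hp1⟩, ⟨p2, hp2⟩⟩ ⟨⟨q1, hq1⟩, ⟨q2, hq2⟩⟩ hpq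
          simp only [Prod.mk.injEq, Fin.mk.injEq] at hpq ⊢
          omega)
      (by rintro ⟨⟨p1, hp1⟩, ⟨p2, hp2⟩⟩ ⟨⟨q1, hq1⟩, ⟨q2, hq2⟩⟩ hpq
          simp only [grid, SimpleGraph.boxProd_adj, SimpleGraph.pathGraph_adj,
            Fin.mk.injEq, Fin.ext_iff] at hpq ⊢
          omega)
    convert hb using 2 <;> simp [Prod.ext_iff, Fin.ext_iff]
  have hrb : effRes (grid m n)
      ((⟨1, by omega⟩ : Fin m), (⟨0, by omega⟩ : Fin n))
      ((⟨2, by omega⟩ : Fin m), (⟨0, by omega⟩ : Fin n)) ≤ 109/161 := by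
    have hb := boundB (grid m n) hconn
      (fun p => ((⟨p.1.val, by have := p.1.is_lt; omega⟩ : Fin m),
        (⟨p.2.val, by have := p.2.is_lt; omega⟩ : Fin n)))
      (by rintro ⟨⟨p1, hp1⟩, ⟨p2, hp2⟩⟩ ⟨⟨q1, hq1⟩, ⟨q2, hq2⟩⟩ hpq
          simp only [Prod.mk.injEq, Fin.mk.injEq] at hpq ⊢
          omega)
      (by rintro ⟨⟨p1, hp1⟩, ⟨p2, hp2⟩⟩ ⟨⟨q1, hq1⟩, ⟨q2, hq2⟩⟩ hpq
          simp only [grid, SimpleGraph.boxProd_adj, SimpleGraph.pathGraph_adj,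
            Fin.mk.injEq, Fin.ext_iff] at hpq ⊢
          omega)
    convert hb using 2 <;> simp [Prod.ext_iff, Fin.ext_iff]
  have hrc : effRes (grid m n)
      ((⟨1, by omega⟩ : Fin m), (⟨0, by omega⟩ : Fin n))
      ((⟨1, by omega⟩ : Fin m), (⟨1, by omega⟩ : Fin n)) ≤ 3/5 := by
    have hb := boundA (grid m n) hconn
      (fun p => ((⟨p.1.val, by have := p.1.is_lt; omega⟩ : Fin m),
        (⟨p.2.val, by have := p.2.is_lt; omega⟩ : Fin n)))
      (by rintro ⟨⟨p1, hp1⟩, ⟨p2, hp2⟩⟩ ⟨⟨q1, hq1⟩, ⟨q2, hq2⟩⟩ hpq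
          simp only [Prod.mk.injEq, Fin.mk.injEq] at hpq ⊢
          omega)
      (by rintro ⟨⟨p1, hp1⟩, ⟨p2, hp2⟩⟩ ⟨⟨q1, hq1⟩, ⟨q2, hq2⟩⟩ hpq
          simp only [grid, SimpleGraph.boxProd_adj, SimpleGraph.pathGraph_adj,
            Fin.mk.injEq, Fin.ext_iff] at hpq ⊢
          omega)
    convert hb using 2 <;> simp [Prod.ext_iff, Fin.ext_iff]
  have := curv_ge3 (grid m n) _ _ _ _
    (by intro h; simp only [Prod.mk.injEq, Fin.mk.injEq] at h; omega)
    (by intro h; simp only [Prod.mk.injEq, Fin.mk.injEq] at h; omega)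
    (by intro h; simp only [Prod.mk.injEq, Fin.mk.injEq] at h; omega)
    hS _ _ _ hra hrb hrc
  refine le_trans (by norm_num) this

lemma case_strip (n : ℕ) (hn : 4 ≤ n) :
    17/4830 ≤ curv (grid 3 n) ((⟨1, by omega⟩ : Fin 3), (⟨0, by omega⟩ : Fin n)) := by
  have hconn : (grid 3 n).Connected := grid_connected 3 n (by omega) (by omega)
  have hS : ∀ y : Fin 3 × Fin n,
      (grid 3 n).Adj ((⟨1, by omega⟩ : Fin 3), (⟨0, by omega⟩ : Fin n)) y ↔
      (y = ((⟨0, by omega⟩ : Fin 3), (⟨0, by omega⟩ : Fin n))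
        ∨ y = ((⟨2, by omega⟩ : Fin 3), (⟨0, by omega⟩ : Fin n))
        ∨ y = ((⟨1, by omega⟩ : Fin 3), (⟨1, by omega⟩ : Fin n))) := by
    rintro ⟨⟨y1, h1⟩, ⟨y2, h2⟩⟩
    simp only [grid, SimpleGraph.boxProd_adj, SimpleGraph.pathGraph_adj,
      Prod.mk.injEq, Fin.mk.injEq, Fin.ext_iff]
    omega
  have hra : effRes (grid 3 n)
      ((⟨1, by omega⟩ : Fin 3), (⟨0, by omega⟩ : Fin n))
      ((⟨0, by omega⟩ : Fin 3), (⟨0, by omega⟩ : Fin n)) ≤ 1703/2415 := by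
    rw [effRes_symm]
    have hb := boundD4 (grid 3 n) hconn
      (fun p => ((⟨p.1.val, by have := p.1.is_lt; omega⟩ : Fin 3),
        (⟨p.2.val, by have := p.2.is_lt; omega⟩ : Fin n)))
      (by rintro ⟨⟨p1, hp1⟩, ⟨p2, hp2⟩⟩ ⟨⟨q1, hq1⟩, ⟨q2, hq2⟩⟩ hpq
          simp only [Prod.mk.injEq, Fin.mk.injEq] at hpq ⊢
          omega)
      (by rintro ⟨⟨p1, hp1⟩, ⟨p2, hp2⟩⟩ ⟨⟨q1, hq1⟩, ⟨q2, hq2⟩⟩ hpq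
          simp only [grid, SimpleGraph.boxProd_adj, SimpleGraph.pathGraph_adj,
            Fin.mk.injEq, Fin.ext_iff] at hpq ⊢
          omega)
    convert hb using 2 <;> simp [Prod.ext_iff, Fin.ext_iff]
  have hrb : effRes (grid 3 n)
      ((⟨1, by omega⟩ : Fin 3), (⟨0, by omega⟩ : Fin n))
      ((⟨2, by omega⟩ : Fin 3), (⟨0, by omega⟩ : Fin n)) ≤ 1703/2415 := by
    rw [effRes_symm]
    have hb := boundD4 (grid 3 n) hconn
      (fun p => ((⟨2 - p.1.val, by omega⟩ : Fin 3),
        (⟨p.2.val, by have := p.2.is_lt; omega⟩ : Fin n)))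
      (by rintro ⟨⟨p1, hp1⟩, ⟨p2, hp2⟩⟩ ⟨⟨q1, hq1⟩, ⟨q2, hq2⟩⟩ hpq
          simp only [Prod.mk.injEq, Fin.mk.injEq] at hpq ⊢
          omega)
      (by rintro ⟨⟨p1, hp1⟩, ⟨p2, hp2⟩⟩ ⟨⟨q1, hq1⟩, ⟨q2, hq2⟩⟩ hpq
          simp only [grid, SimpleGraph.boxProd_adj, SimpleGraph.pathGraph_adj,
            Fin.mk.injEq, Fin.ext_iff] at hpq ⊢
          omega)
    convert hb using 2 <;> simp [Prod.ext_iff, Fin.ext_iff]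
  have hrc : effRes (grid 3 n)
      ((⟨1, by omega⟩ : Fin 3), (⟨0, by omega⟩ : Fin n))
      ((⟨1, by omega⟩ : Fin 3), (⟨1, by omega⟩ : Fin n)) ≤ 67/115 := by
    have hb := boundA4 (grid 3 n) hconn
      (fun p => ((⟨p.1.val, by have := p.1.is_lt; omega⟩ : Fin 3),
        (⟨p.2.val, by have := p.2.is_lt; omega⟩ : Fin n)))
      (by rintro ⟨⟨p1, hp1⟩, ⟨p2, hp2⟩⟩ ⟨⟨q1, hq1⟩, ⟨q2, hq2⟩⟩ hpq
          simp only [Prod.mk.injEq, Fin.mk.injEq] at hpq ⊢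
          omega)
      (by rintro ⟨⟨p1, hp1⟩, ⟨p2, hp2⟩⟩ ⟨⟨q1, hq1⟩, ⟨q2, hq2⟩⟩ hpq
          simp only [grid, SimpleGraph.boxProd_adj, SimpleGraph.pathGraph_adj,
            Fin.mk.injEq, Fin.ext_iff] at hpq ⊢
          omega)
    convert hb using 2 <;> simp [Prod.ext_iff, Fin.ext_iff]
  have := curv_ge3 (grid 3 n) _ _ _ _
    (by intro h; simp only [Prod.mk.injEq, Fin.mk.injEq] at h; omega)
    (by intro h; simp only [Prod.mk.injEq, Fin.mk.injEq] at h; omega)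
    (by intro h; simp only [Prod.mk.injEq, Fin.mk.injEq] at h; omega)
    hS _ _ _ hra hrb hrc
  refine le_trans (by norm_num) this

end Cases2

section Final

lemma case_bottom (m n : ℕ) (hm : 3 ≤ m) (hn : 3 ≤ n) (hmn : 3 < m ∨ 3 < n)
    (v : Fin m × Fin n) (hv : v.2.val = 0) :
    17/4830 ≤ curv (grid m n) v := by
  obtain ⟨⟨i, hi⟩, ⟨j, hj⟩⟩ := v
  simp only at hv
  subst hv
  by_cases h0 : i = 0
  · subst h0; exact case_corner m n hm hn
  by_cases hlast : i = m - 1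
  · subst hlast
    have hiso := curv_iso (grid m n) (grid m n) (hrefl m n)
      ((⟨0, by omega⟩ : Fin m), (⟨0, by omega⟩ : Fin n))
    have himg : (hrefl m n) ((⟨0, by omega⟩ : Fin m), (⟨0, by omega⟩ : Fin n))
        = ((⟨m - 1, hi⟩ : Fin m), (⟨0, by omega⟩ : Fin n)) := by
      show (Fin.rev _, _) = _
      refine Prod.ext ?_ rfl
      rw [Fin.ext_iff, Fin.val_rev]
    rw [himg] at hiso
    exact le_of_le_of_eq (case_corner m n hm hn) hiso.symm
  by_cases h1 : i = 1
  · subst h1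
    by_cases hm3 : m = 3
    · subst hm3
      have hn4 : 4 ≤ n := by omega
      exact case_strip n hn4
    · exact case_near m n (by omega) hn
  by_cases hpen : i = m - 2
  · subst hpen
    have hm4 : 4 ≤ m := by omega
    have hiso := curv_iso (grid m n) (grid m n) (hrefl m n)
      ((⟨1, by omega⟩ : Fin m), (⟨0, by omega⟩ : Fin n))
    have himg : (hrefl m n) ((⟨1, by omega⟩ : Fin m), (⟨0, by omega⟩ : Fin n))
        = ((⟨m - 2, hi⟩ : Fin m), (⟨0, by omega⟩ : Fin n)) := by
      show (Fin.rev _, _) = _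
      refine Prod.ext ?_ rfl
      rw [Fin.ext_iff, Fin.val_rev]
    rw [himg] at hiso
    exact le_of_le_of_eq (case_near m n hm4 hn) hiso.symm
  · exact case_mid m n hm hn i (by omega) (by omega)

lemma case_row (m n : ℕ) (hm : 3 ≤ m) (hn : 3 ≤ n) (hmn : 3 < m ∨ 3 < n)
    (v : Fin m × Fin n) (hv : v.2.val = 0 ∨ v.2.val = n - 1) :
    17/4830 ≤ curv (grid m n) v := by
  rcases hv with hv | hv
  · exact case_bottom m n hm hn hmn v hv
  · obtain ⟨v1, v2⟩ := v
    simp only at hv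
    have hiso := curv_iso (grid m n) (grid m n) (vrefl m n) (v1, Fin.rev v2)
    have himg : (vrefl m n) (v1, Fin.rev v2) = (v1, v2) := by
      show (v1, Fin.rev (Fin.rev v2)) = (v1, v2)
      rw [Fin.rev_rev]
    rw [himg] at hiso
    refine le_of_le_of_eq (case_bottom m n hm hn hmn (v1, Fin.rev v2) ?_) hiso.symm
    simp only [Fin.val_rev]
    omega

theorem grid_boundary_curv_pos' (m n : ℕ) (hm : 3 ≤ m) (hn : 3 ≤ n)
    (hmn : 3 < m ∨ 3 < n) (v : Fin m × Fin n)
    (hb : v.1.val = 0 ∨ v.1.val = m - 1 ∨ v.2.val = 0 ∨ v.2.val = n - 1) :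
    17 / 4830 ≤ curv (grid m n) v ∧ 0 < curv (grid m n) v := by
  have key : 17 / 4830 ≤ curv (grid m n) v := by
    rcases hb with h | h | h | h
    · have hiso := curv_iso (grid m n) (grid n m) (gswap m n) v
      rw [← hiso]
      have : (gswap m n) v = (v.2, v.1) := rfl
      rw [this]
      exact case_row n m hn hm (hmn.symm) (v.2, v.1) (Or.inl h)
    · have hiso := curv_iso (grid m n) (grid n m) (gswap m n) v
      rw [← hiso]
      have : (gswap m n) v = (v.2, v.1) := rfl
      rw [this]
      exact case_row n m hn hm (hmn.symm) (v.2, v.1) (Or.inr h)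
    · exact case_row m n hm hn hmn v (Or.inl h)
    · exact case_row m n hm hn hmn v (Or.inr h)
  exact ⟨key, lt_of_lt_of_le (by norm_num) key⟩

end Final

theorem grid_boundary_curv_pos (m n : ℕ) (hm : 3 ≤ m) (hn : 3 ≤ n)
    (hmn : 3 < m ∨ 3 < n) (v : Fin m × Fin n)
    (hb : v.1.val = 0 ∨ v.1.val = m - 1 ∨ v.2.val = 0 ∨ v.2.val = n - 1) :
    17 / 4830 ≤ curv (grid m n) v ∧ 0 < curv (grid m n) v :=
  grid_boundary_curv_pos' m n hm hn hmn v hb
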